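/- Let (G,𝒳,k) be a Yes-instance of VDP. If there is a terminal pair (s,t) ∈ 𝒳 with st ∈ E(G), then every minimum solution of (G,𝒳,k) contains the one-edge path P_st from s to t; that is, in every minimum solution, the path assigned to some occurrence of a terminal pair with endpoints {s,t} is exactly the single edge st. -/
import Mathlib


open SimpleGraph Finset

/-- A family of walks in `G` connecting the terminal pairs `X`. -/
abbrev WalkFamily {V : Type*} (G : SimpleGraph V) {ι : Type*} (X : ι → V × V) :=
  ∀ i : ι, G.Walk (X i).1 (X i).2

/-- No internal vertex of one walk of the family lies on any other walk. -/
def PairwiseInternallyDisjoint {V : Type*} (G : SimpleGraph V) {ι : Type*}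
    (X : ι → V × V) (P : WalkFamily G X) : Prop :=
  ∀ i j : ι, i ≠ j → ∀ x : V, x ∈ (P i).support.tail.dropLast → x ∉ (P j).support

/-- A solution of the Vertex-Disjoint Paths (VDP) instance `(G, X)`: a family of pairwise
distinct paths connecting the terminal pairs that are pairwise internally vertex-disjoint. -/
def IsVDPSolution {V : Type*} (G : SimpleGraph V) {ι : Type*} (X : ι → V × V)
    (P : WalkFamily G X) : Prop :=
  (∀ i, (P i).IsPath) ∧
  (∀ i j : ι, i ≠ j → (P i).support ≠ (P j).support) ∧
  PairwiseInternallyDisjoint G X P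

/-- `(G, X)` is a Yes-instance of VDP. -/
def VDPYes {V : Type*} (G : SimpleGraph V) {ι : Type*} (X : ι → V × V) : Prop :=
  ∃ P : WalkFamily G X, IsVDPSolution G X P

/-- A minimum solution of the VDP instance `(G, X)`: a solution minimizing the total
number of edges of the paths. -/
def IsMinVDPSolution {V : Type*} (G : SimpleGraph V) {ι : Type*} [Fintype ι]
    (X : ι → V × V) (P : WalkFamily G X) : Prop :=
  IsVDPSolution G X P ∧
    ∀ Q : WalkFamily G X, IsVDPSolution G X Q →
      ∑ i, (P i).length ≤ ∑ i, (Q i).length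

/-- If a terminal pair `(s, t)` with `st ∈ E(G)` occurs in `X`, then every
minimum VDP solution assigns to some occurrence of a terminal pair with endpoints `{s, t}`
exactly the one-edge path `st`. -/
theorem min_vdp_solution_contains_edge {V : Type*} (G : SimpleGraph V)
    {k : ℕ} (X : Fin k → V × V) (hX : ∀ i, (X i).1 ≠ (X i).2)
    (s t : V) (hadj : G.Adj s t) (hmem : ∃ i : Fin k, X i = (s, t))
    (P : WalkFamily G X) (hP : IsMinVDPSolution G X P) :
    ∃ j : Fin k, (X j = (s, t) ∨ X j = (t, s)) ∧ (P j).length = 1 := by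
  by_contra hcon
  push_neg at hcon
  obtain ⟨i, hi⟩ := hmem
  have hs : (X i).1 = s := by rw [hi]
  have ht : (X i).2 = t := by rw [hi]
  set w : G.Walk (X i).1 (X i).2 := (Walk.cons hadj Walk.nil).copy hs.symm ht.symm with hw
  have hw_supp : w.support = [s, t] := by simp [hw]
  have hw_len : w.length = 1 := by simp [hw]
  have hw_path : w.IsPath := by
    rw [hw, Walk.isPath_copy]
    simp [Walk.isPath_def, hadj.ne]
  set Q : WalkFamily G X := Function.update P i w with hQ
  have hQi : Q i = w := Function.update_self i w P
  have hQj : ∀ j, j ≠ i → Q j = P j := fun j hj => Function.update_of_ne hj w P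
  obtain ⟨hpath, hdist, hint⟩ := hP.1
  -- no path in P has support [s, t]
  have hsupp_ne : ∀ l, (P l).support ≠ [s, t] := by
    intro l hl
    have hlen : (P l).length = 1 := by
      have := Walk.length_support (P l)
      rw [hl] at this
      simpa using this.symm
    have h1 : (X l).1 = s := by
      have := Walk.support_eq_cons (P l)
      rw [hl] at this
      exact (List.cons.injEq _ _ _ _ ▸ this).1.symm
    have h2 : (X l).2 = t := by
      have hm := Walk.end_mem_support (P l)
      rw [hl] at hm
      simp only [List.mem_cons, List.not_mem_nil, or_false] at hm
      rcases hm with hm | hm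
      · exact absurd (h1.trans hm.symm) (hX l)
      · exact hm
    exact hcon l (Or.inl (Prod.ext h1 h2)) hlen
  -- Q is a solution
  have hQsol : IsVDPSolution G X Q := by
    refine ⟨?_, ?_, ?_⟩
    · intro j
      by_cases hj : j = i
      · subst hj; rw [hQi]; exact hw_path
      · rw [hQj j hj]; exact hpath j
    · intro j l hjl
      by_cases hj : j = i
      · subst hj
        rw [hQi, hw_supp, hQj l (Ne.symm hjl)]
        exact fun h => hsupp_ne l h.symm
      · by_cases hl : l = i
        · subst hl
          rw [hQi, hw_supp, hQj j hj]
          exact hsupp_ne j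
        · rw [hQj j hj, hQj l hl]; exact hdist j l hjl
    · intro j l hjl x hx
      by_cases hj : j = i
      · subst hj
        rw [hQi] at hx
        simp [hw_supp] at hx
      · rw [hQj j hj] at hx
        by_cases hl : l = i
        · have h1 := hint j i hj x hx
          have h2 : s ∈ (P i).support := hs ▸ Walk.start_mem_support (P i)
          have h3 : t ∈ (P i).support := ht ▸ Walk.end_mem_support (P i)
          rw [hl, hQi, hw_supp]
          intro hmem
          simp only [List.mem_cons, List.not_mem_nil, or_false] at hmem
          rcases hmem with h | h
          · exact h1 (h ▸ h2)
          · exact h1 (h ▸ h3)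
        · rw [hQj l hl]; exact hint j l hjl x hx
  -- strict length decrease
  have hPi_len : 2 ≤ (P i).length := by
    have h0 : (P i).length ≠ 0 := fun h0 => hX i (Walk.eq_of_length_eq_zero h0)
    have h1 : (P i).length ≠ 1 := hcon i (Or.inl hi)
    omega
  have hlt : ∑ j, (Q j).length < ∑ j, (P j).length := by
    apply Finset.sum_lt_sum
    · intro j _
      by_cases hj : j = i
      · subst hj; rw [hQi, hw_len]; omega
      · rw [hQj j hj]
    · exact ⟨i, Finset.mem_univ i, by rw [hQi, hw_len]; omega⟩
  exact absurd (hP.2 Q hQsol) (not_le.mpr hlt)
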